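/- It is impossible for the peak points of strictly quasiconcave functions f, g : [a,b] → ℝ to satisfy m_g < x₀ < m_f when h = min{f,g} equals g on [a, x₀), equals f on (x₀, b], and f(x₀) = g(x₀). -/
import Mathlib


open Set

/-- `m` is the peak point of `f` on `[a,b]`: `f` is strictly increasing before `m` and
strictly decreasing after `m` (one of the two boundary conventions). -/
def IsPeakPt (f : ℝ → ℝ) (a b m : ℝ) : Prop :=
  m ∈ Set.Icc a b ∧
    ((StrictMonoOn f (Set.Icc a m) ∧ StrictAntiOn f (Set.Ioc m b)) ∨
     (StrictMonoOn f (Set.Ico a m) ∧ StrictAntiOn f (Set.Icc m b)))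

/-- The configuration `m_g < x₀ < m_f` is impossible when `h = min{f,g}` equals
`g` on `[a,x₀)`, equals `f` on `(x₀,b]` and `f x₀ = g x₀`. -/
theorem peak_order_impossible (a b : ℝ) (hab : a ≤ b) (f g : ℝ → ℝ)
    (hf : ∀ x ∈ Icc a b, ∀ x' ∈ Icc a b, x < x' → ∀ l ∈ Ioo (0:ℝ) 1,
      min (f x) (f x') < f (l * x + (1 - l) * x'))
    (hg : ∀ x ∈ Icc a b, ∀ x' ∈ Icc a b, x < x' → ∀ l ∈ Ioo (0:ℝ) 1,
      min (g x) (g x') < g (l * x + (1 - l) * x'))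
    (mf mg x₀ : ℝ) (hx₀ : x₀ ∈ Icc a b)
    (hmf : IsPeakPt f a b mf) (hmg : IsPeakPt g a b mg)
    (hbefore : ∀ x ∈ Icc a b, x < x₀ → min (f x) (g x) = g x)
    (hat : f x₀ = g x₀)
    (hafter : ∀ x ∈ Icc a b, x₀ < x → min (f x) (g x) = f x) :
    ¬ (mg < x₀ ∧ x₀ < mf) := by
  rintro ⟨h1, h2⟩
  obtain ⟨hmfmem, hfcases⟩ := hmf
  obtain ⟨hmgmem, hgcases⟩ := hmg
  set x := (x₀ + mf)/2 with hx
  have hx1 : x₀ < x := by rw [hx]; linarith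
  have hx2 : x < mf := by rw [hx]; linarith
  have hxab : x ∈ Icc a b := ⟨by linarith [hx₀.1], by linarith [hmfmem.2]⟩
  have hfx : f x₀ < f x := by
    rcases hfcases with ⟨hm, _⟩ | ⟨hm, _⟩
    · exact hm ⟨hx₀.1, le_of_lt h2⟩ ⟨hxab.1, le_of_lt hx2⟩ hx1
    · exact hm ⟨hx₀.1, h2⟩ ⟨hxab.1, hx2⟩ hx1
  have hgx : g x < g x₀ := by
    rcases hgcases with ⟨_, hm⟩ | ⟨_, hm⟩
    · exact hm ⟨h1, hx₀.2⟩ ⟨by linarith, hxab.2⟩ hx1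
    · exact hm ⟨le_of_lt h1, hx₀.2⟩ ⟨by linarith, hxab.2⟩ hx1
  have hle : f x ≤ g x := min_eq_left_iff.mp (hafter x hxab hx1)
  linarith
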